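/- Let u, u' : ℕ → ℝ be two sequences that agree at every position except a single position p ≥ 1, and suppose position p lies in a strictly monotone ascending segment of both sequences: u(p−1) < min(u(p), u'(p)) and max(u(p), u'(p)) < u(p+1). Then for all real thresholds α > β and all n ≥ p+1, R_{α,β}[u](n) = R_{α,β}[u'](n); consequently, PAL_μ(u)(n) = PAL_μ(u')(n) for every finite weighted family μ and all n ≥ p+1. In particular no Preisach Attention Layer can compute the random-access retrieval function f_copy(u, p) = u(p), since that function distinguishes u from u'. -/
import Mathlib


/-- The elementary relay `R_{α,β}` of Preisach hysteresis theory. -/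
noncomputable def relay (α β : ℝ) (u : ℕ → ℝ) : ℕ → ℝ
  | 0 => if u 0 ≥ α then 1 else 0
  | n + 1 => if u (n + 1) ≥ α then 1 else if u (n + 1) ≤ β then 0 else relay α β u n

/-- A discrete Preisach Attention Layer with a finite set `S` of threshold pairs
`(α, β)` and weights `μ`. -/
noncomputable def PAL (S : Finset (ℝ × ℝ)) (μ : ℝ × ℝ → ℝ) (u : ℕ → ℝ) (n : ℕ) : ℝ :=
  ∑ p ∈ S, μ p * relay p.1 p.2 u n

lemma relay_congr (α β : ℝ) (u u' : ℕ → ℝ) (m : ℕ) (h : ∀ j ≤ m, u j = u' j) :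
    relay α β u m = relay α β u' m := by
  induction m with
  | zero => simp [relay, h 0 le_rfl]
  | succ n ih =>
    have h1 := h (n + 1) le_rfl
    have h2 := ih (fun j hj => h j (Nat.le_succ_of_le hj))
    simp [relay, h1, h2]

lemma relay_succ (α β : ℝ) (u : ℕ → ℝ) (n : ℕ) :
    relay α β u (n + 1) =
      if u (n + 1) ≥ α then 1 else if u (n + 1) ≤ β then 0 else relay α β u n := by
  rw [relay]

lemma relay_zero (α β : ℝ) (hab : β < α) (u : ℕ → ℝ) (m : ℕ) (h : u m ≤ β) :
    relay α β u m = 0 := by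
  cases m with
  | zero =>
    rw [relay, if_neg (by simp only [ge_iff_le, not_le]; linarith)]
  | succ k =>
    rw [relay, if_neg (by simp only [ge_iff_le, not_le]; linarith), if_pos h]

/-- Two sequences differing only at a position `p` lying in a strictly monotone
ascending segment of both have identical relay states (hence identical PAL outputs)
at all times `n ≥ p + 1`.  In particular no Preisach Attention Layer can compute the
random-access retrieval function `f_copy(u, p) = u p`, since that function
distinguishes `u` from `u'`. -/
theorem relay_PAL_no_random_access (u u' : ℕ → ℝ) (p : ℕ) (hp : 1 ≤ p)
    (hagree : ∀ j, j ≠ p → u j = u' j)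
    (hlo : u (p - 1) < min (u p) (u' p))
    (hhi : max (u p) (u' p) < u (p + 1)) :
    (∀ α β : ℝ, α > β → ∀ n, p + 1 ≤ n → relay α β u n = relay α β u' n) ∧
    (∀ (S : Finset (ℝ × ℝ)), (∀ q ∈ S, q.1 > q.2) → ∀ (μ : ℝ × ℝ → ℝ),
      ∀ n, p + 1 ≤ n → PAL S μ u n = PAL S μ u' n) ∧
    (u p ≠ u' p →
      ∀ (S : Finset (ℝ × ℝ)), (∀ q ∈ S, q.1 > q.2) → ∀ (μ : ℝ × ℝ → ℝ),
        ∀ n, p + 1 ≤ n → ¬(PAL S μ u n = u p ∧ PAL S μ u' n = u' p)) := by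
  obtain ⟨m, rfl⟩ : ∃ m, p = m + 1 := ⟨p - 1, by omega⟩
  simp only [Nat.add_sub_cancel] at hlo
  have hlo1 : u m < u (m + 1) := lt_of_lt_of_le hlo (min_le_left _ _)
  have hlo2 : u m < u' (m + 1) := lt_of_lt_of_le hlo (min_le_right _ _)
  have hhi1 : u (m + 1) < u (m + 2) := lt_of_le_of_lt (le_max_left _ _) hhi
  have hhi2 : u' (m + 1) < u (m + 2) := lt_of_le_of_lt (le_max_right _ _) hhi
  have key : ∀ α β : ℝ, α > β → ∀ n, m + 2 ≤ n → relay α β u n = relay α β u' n := by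
    intro α β hab n hn
    induction n with
    | zero => omega
    | succ n ih =>
      rcases Nat.lt_or_ge n (m + 2) with h | h
      · -- n + 1 = m + 2
        have hnm : n = m + 1 := by omega
        subst hnm
        have hagtop : u (m + 2) = u' (m + 2) := hagree (m + 2) (by omega)
        have hpre : relay α β u m = relay α β u' m :=
          relay_congr α β u u' m (fun j hj => hagree j (by omega))
        rw [relay_succ α β u (m+1), relay_succ α β u' (m+1), ← hagtop]
        split
        · rfl
        · split
          · rfl
          · -- middle case: β < u (m+2) < α
            rename_i hA hB
            push_neg at hA hB
            have hupα : ¬ (u (m + 1) ≥ α) := by simp only [ge_iff_le, not_le]; linarith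
            have hu'pα : ¬ (u' (m + 1) ≥ α) := by simp only [ge_iff_le, not_le]; linarith
            rw [relay_succ α β u m, if_neg hupα, relay_succ α β u' m, if_neg hu'pα]
            by_cases hub : u (m + 1) ≤ β
            · rw [if_pos hub]
              by_cases hub' : u' (m + 1) ≤ β
              · rw [if_pos hub']
              · rw [if_neg hub', ← hpre, relay_zero α β hab u m (by linarith)]
            · rw [if_neg hub]
              by_cases hub' : u' (m + 1) ≤ β
              · rw [if_pos hub', relay_zero α β hab u m (by linarith)]
              · rw [if_neg hub', hpre]
      · -- n ≥ m + 2
        have hne : n + 1 ≠ m + 1 := by omega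
        have h1 := hagree (n + 1) hne
        have h2 := ih h
        simp [relay, h1, h2]
  refine ⟨key, ?_, ?_⟩
  · intro S hS μ n hn
    unfold PAL
    exact Finset.sum_congr rfl (fun q hq => by rw [key q.1 q.2 (hS q hq) n hn])
  · intro hne S hS μ n hn ⟨h1, h2⟩
    have := key
    apply hne
    calc u (m + 1) = PAL S μ u n := h1.symm
      _ = PAL S μ u' n := by
          unfold PAL
          exact Finset.sum_congr rfl (fun q hq => by rw [key q.1 q.2 (hS q hq) n hn])
      _ = u' (m + 1) := h2
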